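/- Let S = ⊕_{n≥0} S_n be a commutative graded ring with S_0 a field k, and let M be a finitely generated Cohen–Macaulay graded S-module of Krull dimension 1. Suppose x ∈ S_b is an M-regular element and S_i = 0 for all 0 < i < b. Then the multiplicity of M with respect to the irrelevant maximal ideal equals dim_k M/xM, i.e., e_0(M) = dim_k(M/xM). -/

import Mathlib

open Filter Module DirectSum Pointwise
set_option linter.unusedSectionVars false
set_option linter.unnecessarySimpa false
set_option linter.unusedVariables false

section Aux

variable {k S : Type} [Field k] [CommRing S] [Algebra k S]
variable {𝒜 : ℕ → Submodule k S} [GradedAlgebra 𝒜]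
variable {M : Type} [AddCommGroup M] [Module S M] [Module k M] [IsScalarTower k S M]
variable {ℳ : ℤ → Submodule k M} [DirectSum.Decomposition ℳ]

/-- The `k`-submodule of elements of degree `≥ e`. -/
def Mge (ℳ : ℤ → Submodule k M) (e : ℤ) : Submodule k M :=
  ⨆ j : {j : ℤ // e ≤ j}, ℳ ↑j

lemma le_Mge {e j : ℤ} (h : e ≤ j) : ℳ j ≤ Mge ℳ e :=
  le_iSup (fun j : {j : ℤ // e ≤ j} => ℳ ↑j) ⟨j, h⟩

lemma Mge_anti {e e' : ℤ} (h : e ≤ e') : Mge ℳ e' ≤ Mge ℳ e :=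
  iSup_le fun j => le_Mge (h.trans j.2)

variable (hsmul : ∀ (i : ℕ) (j : ℤ) (s : S) (m : M), s ∈ 𝒜 i → m ∈ ℳ j → s • m ∈ ℳ (i + j))

include hsmul in
lemma smul_mem_Mge {i : ℕ} {s : S} (hs : s ∈ 𝒜 i) {e : ℤ} {m : M} (hm : m ∈ Mge ℳ e) :
    s • m ∈ Mge ℳ (e + i) := by
  refine Submodule.iSup_induction _ (motive := fun m => s • m ∈ Mge ℳ (e + i)) hm
    (fun j m hmj => ?_) (by simpa using zero_mem _) (fun m₁ m₂ h₁ h₂ => by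
      show s • (m₁ + m₂) ∈ _
      rw [smul_add]; exact add_mem h₁ h₂)
  exact le_Mge (by have := j.2; omega) (hsmul i j s m hs hmj)

include hsmul in
lemma smul_mem_Mge' (s : S) {e : ℤ} {m : M} (hm : m ∈ Mge ℳ e) : s • m ∈ Mge ℳ e := by
  classical
  rw [← DirectSum.sum_support_decompose 𝒜 s, Finset.sum_smul]
  refine sum_mem fun i _ => ?_
  exact Mge_anti (by omega) (smul_mem_Mge hsmul (SetLike.coe_mem _) hm)

/-- `Mge` as an `S`-submodule. -/
def MgeS (ℳ : ℤ → Submodule k M) [DirectSum.Decomposition ℳ]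
    (hsmul : ∀ (i : ℕ) (j : ℤ) (s : S) (m : M), s ∈ 𝒜 i → m ∈ ℳ j → s • m ∈ ℳ (i + j))
    (e : ℤ) : Submodule S M where
  carrier := Mge ℳ e
  add_mem' := fun h1 h2 => add_mem h1 h2
  zero_mem' := zero_mem _
  smul_mem' := fun s m hm => smul_mem_Mge' hsmul s hm

lemma mem_MgeS {e : ℤ} {m : M} : m ∈ MgeS ℳ hsmul e ↔ m ∈ Mge ℳ e := Iff.rfl

lemma exists_Mge (m : M) : ∃ e, m ∈ Mge ℳ e := by
  refine DirectSum.Decomposition.inductionOn ℳ (motive := fun m => ∃ e, m ∈ Mge ℳ e)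
    ⟨0, zero_mem _⟩ (fun {i} mi => ?_)
    (fun m m' ⟨e, he⟩ ⟨e', he'⟩ =>
      ⟨min e e', add_mem (Mge_anti (min_le_left _ _) he) (Mge_anti (min_le_right _ _) he')⟩) m
  exact ⟨i, le_Mge le_rfl (SetLike.coe_mem mi)⟩

include hsmul in
lemma exists_bound [Module.Finite S M] : ∃ d : ℤ, ∀ m : M, m ∈ Mge ℳ d := by
  obtain ⟨G, hG⟩ := Module.Finite.fg_top (R := S) (M := M)
  have hex : ∀ m : M, ∃ e, m ∈ Mge ℳ e := exists_Mge
  choose f hf using hex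
  obtain ⟨d, hd⟩ : ∃ d : ℤ, ∀ g ∈ G, d ≤ f g := by
    classical
    clear hG
    induction G using Finset.cons_induction with
    | empty => exact ⟨0, by simp⟩
    | cons a G ha ih =>
      obtain ⟨d, hd⟩ := ih
      exact ⟨min d (f a), fun g hg => by
        rcases Finset.mem_cons.mp hg with rfl | hg
        · exact min_le_right _ _
        · exact (min_le_left _ _).trans (hd g hg)⟩
  refine ⟨d, fun m => ?_⟩
  have h1 : (⊤ : Submodule S M) ≤ MgeS ℳ hsmul d := by
    rw [← hG]
    refine Submodule.span_le.mpr fun g hg => ?_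
    exact Mge_anti (hd g hg) (hf g)
  exact h1 trivial

variable {b : ℕ} {x : S}

include hsmul in
lemma mS_smul_Mge (hb : 1 ≤ b) (hgap : ∀ i : ℕ, 0 < i → i < b → 𝒜 i = ⊥)
    {mS : Ideal S} (hmS : mS = Ideal.span {s : S | ∃ i : ℕ, 0 < i ∧ s ∈ 𝒜 i}) {E : ℤ} :
    mS • (MgeS ℳ hsmul E) ≤ MgeS ℳ hsmul (E + b) := by
  rw [Submodule.smul_le]
  intro s hs m hm
  rw [hmS] at hs
  induction hs using Submodule.span_induction with
  | mem s hs =>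
    obtain ⟨i, hi0, hsi⟩ := hs
    rcases le_or_gt b i with h | h
    · exact Mge_anti (by omega) (smul_mem_Mge hsmul hsi hm)
    · have : s = 0 := by
        have := hgap i hi0 h
        simpa [this] using hsi
      simpa [this] using zero_mem (Mge ℳ (E + b))
  | zero => simpa using zero_mem (Mge ℳ (E + b))
  | add s t _ _ h1 h2 =>
    rw [add_smul]; exact add_mem h1 h2
  | smul a s _ h1 =>
    rw [smul_eq_mul, mul_smul]
    exact smul_mem_Mge' hsmul a h1

include hsmul in
lemma mS_pow_smul_le (hb : 1 ≤ b) (hgap : ∀ i : ℕ, 0 < i → i < b → 𝒜 i = ⊥)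
    {mS : Ideal S} (hmS : mS = Ideal.span {s : S | ∃ i : ℕ, 0 < i ∧ s ∈ 𝒜 i})
    {d : ℤ} (hd : ∀ m : M, m ∈ Mge ℳ d) (n : ℕ) :
    (mS ^ n • (⊤ : Submodule S M)) ≤ MgeS ℳ hsmul (d + n * b) := by
  induction n with
  | zero =>
    intro m _
    exact Mge_anti (by omega) (hd m)
  | succ n ih =>
    have h1 : mS ^ (n + 1) • (⊤ : Submodule S M) = mS • (mS ^ n • (⊤ : Submodule S M)) := by
      rw [pow_succ']
      exact Submodule.smul_assoc mS (mS ^ n) ⊤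
    rw [h1]
    refine le_trans (smul_mono_right mS ih) (le_trans (mS_smul_Mge hsmul hb hgap hmS) ?_)
    intro m hm
    exact Mge_anti (by push_cast; ring_nf; omega) hm

include hsmul in
lemma decompose_smul_deg (hx : x ∈ 𝒜 b) (m₀ : M) (j : ℤ) :
    (decompose ℳ (x • m₀) j : M) = x • (decompose ℳ m₀ (j - b) : M) := by
  refine DirectSum.Decomposition.inductionOn ℳ
    (motive := fun m₀ => (decompose ℳ (x • m₀) j : M) = x • (decompose ℳ m₀ (j - b) : M))
    (by simp) (fun {i} mi => ?_) (fun m m' h h' => ?_) m₀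
  · show (decompose ℳ (x • (mi : M)) j : M) = x • (decompose ℳ ((mi : M)) (j - b) : M)
    have hxm : x • (mi : M) ∈ ℳ ((b : ℤ) + i) := hsmul b i x mi hx (SetLike.coe_mem mi)
    by_cases hj : j = (b : ℤ) + i
    · subst hj
      rw [DirectSum.decompose_of_mem_same ℳ hxm]
      have : (b : ℤ) + i - b = i := by ring
      rw [this, DirectSum.decompose_of_mem_same ℳ (SetLike.coe_mem mi)]
    · rw [DirectSum.decompose_of_mem_ne ℳ hxm (fun h => hj h.symm)]
      have : j - (b : ℤ) ≠ i := fun h => hj (by omega)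
      rw [DirectSum.decompose_of_mem_ne ℳ (SetLike.coe_mem mi) (fun h => this h.symm), smul_zero]
  · show (decompose ℳ (x • (m + m')) j : M) = x • (decompose ℳ (m + m') (j - b) : M)
    rw [smul_add, DirectSum.decompose_add, DirectSum.decompose_add, DirectSum.add_apply,
      DirectSum.add_apply, Submodule.coe_add, Submodule.coe_add, h, h', smul_add]

lemma mem_xpow_smul_iff {n : ℕ} {m : M} :
    m ∈ (Ideal.span {x}) ^ n • (⊤ : Submodule S M) ↔ ∃ m' : M, x ^ n • m' = m := by
  rw [Ideal.span_singleton_pow, Submodule.ideal_span_singleton_smul]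
  constructor
  · intro h
    have : m ∈ x ^ n • ((⊤ : Submodule S M) : Set M) := h
    obtain ⟨m', -, rfl⟩ := this
    exact ⟨m', rfl⟩
  · rintro ⟨m', rfl⟩
    exact Submodule.smul_mem_pointwise_smul m' _ ⊤ trivial

include hsmul in
lemma component_mem_xM (hx : x ∈ 𝒜 b) {m : M}
    (hm : m ∈ Ideal.span {x} • (⊤ : Submodule S M)) (j : ℤ) :
    (decompose ℳ m j : M) ∈ Ideal.span {x} • (⊤ : Submodule S M) := by
  have hm' : m ∈ Ideal.span {x} ^ 1 • (⊤ : Submodule S M) := by rwa [pow_one]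
  obtain ⟨m₀, rfl⟩ := mem_xpow_smul_iff.mp hm'
  rw [pow_one] at *
  rw [decompose_smul_deg hsmul hx]
  exact Submodule.smul_mem_smul (Ideal.mem_span_singleton_self x) trivial

include hsmul in
lemma exists_N (hx : x ∈ 𝒜 b)
    [FiniteDimensional k (M ⧸ (Ideal.span {x} • (⊤ : Submodule S M)))] :
    ∃ N : ℤ, ∀ j : ℤ, N ≤ j →
      ℳ j ≤ (Ideal.span {x} • (⊤ : Submodule S M)).restrictScalars k := by
  classical
  set xM := Ideal.span {x} • (⊤ : Submodule S M) with hxM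
  set Bad := {j : ℤ | ¬ ℳ j ≤ xM.restrictScalars k} with hBadDef
  suffices hBad : Bad.Finite by
    rcases Set.eq_empty_or_nonempty Bad with he | hne
    · refine ⟨0, fun j _ => ?_⟩
      by_contra h
      exact absurd he (Set.nonempty_iff_ne_empty.mp ⟨j, h⟩)
    · obtain ⟨N, hN⟩ := hBad.bddAbove
      refine ⟨N + 1, fun j hj => ?_⟩
      by_contra h
      have := hN (a := j) h
      omega
  by_contra hinf
  have hinf : Bad.Infinite := hinf
  obtain ⟨t, htB, htc⟩ := hinf.exists_subset_card_eq
    (finrank k (M ⧸ xM) + 1)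
  have hchoice : ∀ j : (t : Finset ℤ), ∃ m : M, m ∈ ℳ (j : ℤ) ∧ m ∉ xM.restrictScalars k := by
    intro j
    have : ¬ ℳ (j : ℤ) ≤ xM.restrictScalars k := htB j.2
    obtain ⟨m, hm1, hm2⟩ := SetLike.not_le_iff_exists.mp this
    exact ⟨m, hm1, hm2⟩
  choose m hm1 hm2 using hchoice
  have hli : LinearIndependent k
      (fun j : (t : Finset ℤ) => Submodule.Quotient.mk (p := xM) (m j)) := by
    rw [linearIndependent_iff']
    intro s g hsum i₀ hi₀
    by_contra hg
    have hmem : (∑ i ∈ s, g i • m i) ∈ xM.restrictScalars k := by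
      have h0 : Submodule.Quotient.mk (p := xM) (∑ i ∈ s, g i • m i) = 0 := by
        rw [← hsum, ← Submodule.mkQ_apply, map_sum]
        simp [Submodule.mkQ_apply, Submodule.Quotient.mk_smul]
      exact (Submodule.Quotient.mk_eq_zero xM).mp h0
    have hcomp : (decompose ℳ (∑ i ∈ s, g i • m i) (i₀ : ℤ) : M) = g i₀ • m i₀ := by
      rw [DirectSum.decompose_sum]
      rw [DFinsupp.finset_sum_apply]
      rw [AddSubmonoidClass.coe_finset_sum]
      rw [Finset.sum_eq_single i₀]
      · exact DirectSum.decompose_of_mem_same ℳ (Submodule.smul_mem _ _ (hm1 i₀))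
      · intro i _ hne
        exact DirectSum.decompose_of_mem_ne ℳ (Submodule.smul_mem _ _ (hm1 i))
          (Subtype.coe_injective.ne hne)
      · intro h; exact absurd hi₀ h
    have hx2 : g i₀ • m i₀ ∈ xM.restrictScalars k := by
      rw [← hcomp]
      exact component_mem_xM hsmul hx hmem (i₀ : ℤ)
    have : m i₀ ∈ xM.restrictScalars k := by
      have h3 := (xM.restrictScalars k).smul_mem (g i₀)⁻¹ hx2
      rwa [inv_smul_smul₀ hg] at h3
    exact hm2 i₀ this
  have hcard := hli.fintype_card_le_finrank
  rw [Fintype.card_coe, htc] at hcard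
  omega

include hsmul in
lemma exists_xpow_divisible (hx : x ∈ 𝒜 b) {N : ℤ}
    (hN : ∀ j : ℤ, N ≤ j → ℳ j ≤ (Ideal.span {x} • (⊤ : Submodule S M)).restrictScalars k) :
    ∀ (n : ℕ) (j : ℤ) (m : M), m ∈ ℳ j → N + n * b ≤ j + b →
      ∃ m' : M, x ^ n • m' = m := by
  intro n
  induction n with
  | zero => exact fun j m hm _ => ⟨m, by simp⟩
  | succ n ih =>
    intro j m hm hjb
    have hcast : ((n + 1 : ℕ) : ℤ) * (b : ℤ) = (n : ℤ) * b + b := by push_cast; ring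
    have hnb : (0 : ℤ) ≤ (n : ℤ) * b := by positivity
    have hjN : N ≤ j := by linarith
    have hmx : m ∈ Ideal.span {x} • (⊤ : Submodule S M) := hN j hjN hm
    have hmx1 : m ∈ Ideal.span {x} ^ 1 • (⊤ : Submodule S M) := by rwa [pow_one]
    obtain ⟨m₀, rfl⟩ := mem_xpow_smul_iff.mp hmx1
    rw [pow_one] at hm ⊢
    have key : x • m₀ = x • (decompose ℳ m₀ (j - b) : M) := by
      conv_lhs => rw [← DirectSum.decompose_of_mem_same ℳ hm,
        decompose_smul_deg hsmul hx]
    obtain ⟨m', hm'⟩ := ih (j - b) (decompose ℳ m₀ (j - b) : M) (SetLike.coe_mem _)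
      (by linarith)
    refine ⟨m', ?_⟩
    rw [pow_succ', mul_smul, hm', ← key]

omit [GradedAlgebra 𝒜] [DirectSum.Decomposition ℳ] in
lemma finrank_quot_mono {p q : Submodule S M} (h : p ≤ q)
    [FiniteDimensional k (M ⧸ p)] :
    finrank k (M ⧸ q) ≤ finrank k (M ⧸ p) := by
  let f : (M ⧸ p) →ₗ[k] (M ⧸ q) :=
    (Submodule.mapQ p q LinearMap.id (by simpa using h)).restrictScalars k
  have hf : Function.Surjective f := by
    intro z
    obtain ⟨m, rfl⟩ := Submodule.Quotient.mk_surjective _ z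
    exact ⟨Submodule.Quotient.mk m, by simp [f, Submodule.mapQ_apply]⟩
  exact finrank_le_finrank_of_rank_le_rank
    (by simpa using f.rank_le_of_surjective hf) (rank_lt_aleph0 k _)

omit [GradedAlgebra 𝒜] [DirectSum.Decomposition ℳ] in
lemma fd_of_fd_sub_quot {V : Type} [AddCommGroup V] [Module k V] (W : Submodule k V)
    [FiniteDimensional k W] [FiniteDimensional k (V ⧸ W)] : FiniteDimensional k V := by
  have h : Module.rank k V < Cardinal.aleph0 := by
    rw [← Submodule.rank_quotient_add_rank W]
    exact Cardinal.add_lt_aleph0 (Module.rank_lt_aleph0 k _) (Module.rank_lt_aleph0 k _)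
  exact Module.rank_lt_aleph0_iff.mp h

variable (hreg : ∀ m : M, x • m = 0 → m = 0)

omit [GradedAlgebra 𝒜] [DirectSum.Decomposition ℳ] in
include hreg in
lemma finrank_xpow_quot
    [FiniteDimensional k (M ⧸ (Ideal.span {x} • (⊤ : Submodule S M)))] (n : ℕ) :
    FiniteDimensional k (M ⧸ ((Ideal.span {x}) ^ n • (⊤ : Submodule S M))) ∧
      finrank k (M ⧸ ((Ideal.span {x}) ^ n • (⊤ : Submodule S M))) =
        n * finrank k (M ⧸ (Ideal.span {x} • (⊤ : Submodule S M))) := by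
  induction n with
  | zero =>
    have htop : (Ideal.span {x}) ^ 0 • (⊤ : Submodule S M) = ⊤ := by
      rw [pow_zero, Ideal.one_eq_top, Submodule.top_smul]
    have hsub : Subsingleton (M ⧸ ((Ideal.span {x}) ^ 0 • (⊤ : Submodule S M))) := by
      rw [htop]
      exact Submodule.Quotient.subsingleton_iff.mpr rfl
    constructor
    · exact Module.Finite.of_surjective (0 : k →ₗ[k] _)
        (fun z => ⟨0, (hsub.elim _ _)⟩)
    · simp [finrank_zero_of_subsingleton]
  | succ n ih =>
    obtain ⟨ihfd, ihrank⟩ := ih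
    set qn := (Ideal.span {x}) ^ n • (⊤ : Submodule S M) with hqn
    set qn1 := (Ideal.span {x}) ^ (n + 1) • (⊤ : Submodule S M) with hqn1
    set q1 := Ideal.span {x} • (⊤ : Submodule S M) with hq1
    haveI : FiniteDimensional k (M ⧸ qn) := ihfd
    -- the maps
    have hψker : qn ≤ LinearMap.ker (qn1.mkQ ∘ₗ LinearMap.lsmul S M x) := by
      intro m hm
      obtain ⟨m', rfl⟩ := mem_xpow_smul_iff.mp hm
      simp only [LinearMap.mem_ker, LinearMap.comp_apply, LinearMap.lsmul_apply,
        Submodule.mkQ_apply, Submodule.Quotient.mk_eq_zero]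
      exact mem_xpow_smul_iff.mpr ⟨m', by rw [smul_smul, ← pow_succ']⟩
    let φ : (M ⧸ qn) →ₗ[k] (M ⧸ qn1) :=
      (Submodule.liftQ qn (qn1.mkQ ∘ₗ LinearMap.lsmul S M x) hψker).restrictScalars k
    have hφ_mk : ∀ m : M, φ (Submodule.Quotient.mk m) = Submodule.Quotient.mk (x • m) := by
      intro m; rfl
    have hq_le : qn1 ≤ q1 := by
      refine Submodule.smul_mono_left ?_
      calc (Ideal.span {x}) ^ (n + 1) ≤ (Ideal.span {x}) ^ 1 :=
            Ideal.pow_le_pow_right (by omega)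
        _ = Ideal.span {x} := pow_one _
    let θ : (M ⧸ qn1) →ₗ[k] (M ⧸ q1) :=
      (Submodule.mapQ qn1 q1 LinearMap.id (by simpa using hq_le)).restrictScalars k
    have hθ_mk : ∀ m : M, θ (Submodule.Quotient.mk m) = Submodule.Quotient.mk m := by
      intro m; rfl
    have hθsurj : Function.Surjective θ := by
      intro z
      obtain ⟨m, rfl⟩ := Submodule.Quotient.mk_surjective _ z
      exact ⟨Submodule.Quotient.mk m, hθ_mk m⟩
    have hφinj : Function.Injective φ := by
      rw [← LinearMap.ker_eq_bot]
      refine (Submodule.eq_bot_iff _).mpr fun z hz => ?_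
      obtain ⟨m, rfl⟩ := Submodule.Quotient.mk_surjective _ z
      rw [LinearMap.mem_ker, hφ_mk, Submodule.Quotient.mk_eq_zero] at hz
      obtain ⟨m', hm'⟩ := mem_xpow_smul_iff.mp hz
      have hxm : x • (x ^ n • m' - m) = 0 := by
        rw [smul_sub, smul_smul, ← pow_succ', hm']
        exact sub_self _
      have hm0 : x ^ n • m' - m = 0 := hreg _ hxm
      have : m = x ^ n • m' := by
        rw [sub_eq_zero] at hm0; exact hm0.symm
      rw [Submodule.Quotient.mk_eq_zero]
      exact mem_xpow_smul_iff.mpr ⟨m', this.symm⟩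
    have hker : LinearMap.ker θ = LinearMap.range φ := by
      ext z
      obtain ⟨m, rfl⟩ := Submodule.Quotient.mk_surjective _ z
      constructor
      · intro hz
        rw [LinearMap.mem_ker, hθ_mk, Submodule.Quotient.mk_eq_zero] at hz
        have hz1 : m ∈ (Ideal.span {x}) ^ 1 • (⊤ : Submodule S M) := by
          rwa [pow_one]
        obtain ⟨m', rfl⟩ := mem_xpow_smul_iff.mp hz1
        rw [pow_one]
        exact ⟨Submodule.Quotient.mk m', hφ_mk m'⟩
      · rintro ⟨w, hw⟩
        obtain ⟨m', rfl⟩ := Submodule.Quotient.mk_surjective _ w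
        rw [hφ_mk] at hw
        rw [LinearMap.mem_ker, hθ_mk]
        have hmm : ((Submodule.Quotient.mk m : M ⧸ q1)) = Submodule.Quotient.mk (x • m') := by
          have hd : m - x • m' ∈ qn1 := by
            rw [← Submodule.Quotient.mk_eq_zero, Submodule.Quotient.mk_sub, hw, sub_self]
          have : m - x • m' ∈ q1 := hq_le hd
          rw [← Submodule.Quotient.mk_eq_zero] at this
          rw [Submodule.Quotient.mk_sub] at this
          linear_combination (norm := module) this
        rw [hmm, Submodule.Quotient.mk_eq_zero]
        exact Submodule.smul_mem_smul (Ideal.mem_span_singleton_self x) trivial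
      -- end hker
    haveI hfdrange : FiniteDimensional k (LinearMap.range φ) :=
      Module.Finite.range φ
    haveI hfdker : FiniteDimensional k (LinearMap.ker θ) := by rw [hker]; infer_instance
    haveI hfdcoker : FiniteDimensional k ((M ⧸ qn1) ⧸ LinearMap.ker θ) := by
      have e := θ.quotKerEquivOfSurjective hθsurj
      exact Module.Finite.equiv e.symm
    haveI hfdV : FiniteDimensional k (M ⧸ qn1) := fd_of_fd_sub_quot (LinearMap.ker θ)
    refine ⟨hfdV, ?_⟩
    have h1 : finrank k ((M ⧸ qn1) ⧸ LinearMap.ker θ) + finrank k (LinearMap.ker θ)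
        = finrank k (M ⧸ qn1) := Submodule.finrank_quotient_add_finrank _
    have h2 : finrank k ((M ⧸ qn1) ⧸ LinearMap.ker θ) = finrank k (M ⧸ q1) :=
      (θ.quotKerEquivOfSurjective hθsurj).finrank_eq
    have h3 : finrank k (LinearMap.ker θ) = finrank k (M ⧸ qn) := by
      rw [hker, LinearMap.finrank_range_of_inj hφinj]
    rw [h2, h3, ihrank] at h1
    rw [← h1]
    ring

end Aux

open Filter

/-- Let `S = ⊕_{n≥0} Sₙ` be a commutative graded ring with `S₀ = k` a field, and `M` a
finitely generated Cohen–Macaulay graded `S`-module of Krull dimension `1` (encoded as: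
`M ≠ 0`, `x` is `M`-regular, and `M/xM` has finite length, i.e. finite `k`-dimension).
Suppose `x ∈ S_b` is an `M`-regular element and `Sᵢ = 0` for `0 < i < b`. Then the
multiplicity of `M` with respect to the irrelevant maximal ideal `m_S` equals
`dim_k M/xM`:  `e₀(M) = lim_n length(M/m_Sⁿ M)/n = dim_k (M/xM)`. -/
theorem stmt_3
    (k S : Type) [Field k] [CommRing S] [Algebra k S]
    (𝒜 : ℕ → Submodule k S) [GradedAlgebra 𝒜]
    (h𝒜0 : 𝒜 0 = Submodule.span k {(1 : S)})
    (M : Type) [AddCommGroup M] [Module S M] [Module k M] [IsScalarTower k S M]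
    [Module.Finite S M] [Nontrivial M]
    (ℳ : ℤ → Submodule k M) [DirectSum.Decomposition ℳ]
    (hsmul : ∀ (i : ℕ) (j : ℤ) (s : S) (m : M), s ∈ 𝒜 i → m ∈ ℳ j → s • m ∈ ℳ (i + j))
    (b : ℕ) (hb : 1 ≤ b) (x : S) (hx : x ∈ 𝒜 b)
    (hgap : ∀ i : ℕ, 0 < i → i < b → 𝒜 i = ⊥)
    (hreg : ∀ m : M, x • m = 0 → m = 0)
    (mS : Ideal S) (hmS : mS = Ideal.span {s : S | ∃ i : ℕ, 0 < i ∧ s ∈ 𝒜 i})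
    [FiniteDimensional k (M ⧸ (Ideal.span {x} • (⊤ : Submodule S M)))]
    (hfd : ∀ n : ℕ, FiniteDimensional k (M ⧸ (mS ^ n • (⊤ : Submodule S M)))) :
    Tendsto
      (fun n : ℕ => (Module.finrank k (M ⧸ (mS ^ n • (⊤ : Submodule S M))) : ℝ) / n)
      atTop
      (nhds (Module.finrank k (M ⧸ (Ideal.span {x} • (⊤ : Submodule S M))))) := by
  classical
  set E : ℕ := finrank k (M ⧸ (Ideal.span {x} • (⊤ : Submodule S M))) with hE
  obtain ⟨d, hd⟩ := exists_bound (ℳ := ℳ) hsmul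
  obtain ⟨N, hN⟩ := exists_N (ℳ := ℳ) hsmul hx
  set c : ℕ := (N - d).toNat + 1 with hc
  set a : ℕ → ℕ := fun n => finrank k (M ⧸ (mS ^ n • (⊤ : Submodule S M))) with ha
  -- upper bound
  have hxmem : Ideal.span {x} ≤ mS := by
    rw [hmS]
    exact Ideal.span_le.mpr (Set.singleton_subset_iff.mpr
      (Ideal.subset_span ⟨b, by omega, hx⟩))
  have hub : ∀ n : ℕ, a n ≤ n * E := by
    intro n
    obtain ⟨hfdn, hrn⟩ := finrank_xpow_quot (k := k) (x := x) hreg n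
    haveI := hfdn
    have h1 : (Ideal.span {x}) ^ n • (⊤ : Submodule S M) ≤ mS ^ n • ⊤ :=
      Submodule.smul_mono_left (Ideal.pow_right_mono hxmem n)
    have h2 := finrank_quot_mono (k := k) h1
    rw [hrn] at h2
    exact h2
  -- lower bound
  have hlb : ∀ n : ℕ, c ≤ n → (n - c) * E ≤ a n := by
    intro n hcn
    obtain ⟨hfdnc, hrnc⟩ := finrank_xpow_quot (k := k) (x := x) hreg (n - c)
    haveI := hfd n
    have hle : mS ^ n • (⊤ : Submodule S M) ≤ (Ideal.span {x}) ^ (n - c) • ⊤ := by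
      refine le_trans (mS_pow_smul_le hsmul hb hgap hmS hd n) ?_
      intro m hm
      have hm' : m ∈ Mge ℳ (d + n * b) := hm
      refine Submodule.iSup_induction _
        (motive := fun m => m ∈ (Ideal.span {x}) ^ (n - c) • (⊤ : Submodule S M)) hm'
        (fun j mm hmm => ?_) (zero_mem _) (fun m₁ m₂ h₁ h₂ => add_mem h₁ h₂)
      have hj : d + (n : ℤ) * b ≤ (j : ℤ) := j.2
      have harith : N + ((n - c : ℕ) : ℤ) * b ≤ (j : ℤ) + b := by
        have h1 : ((n - c : ℕ) : ℤ) = (n : ℤ) - c := by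
          rw [Nat.cast_sub hcn]
        have h2 : ((N : ℤ) - d) < c := by
          have := Int.self_le_toNat (N - d)
          omega
        have hb1 : (1 : ℤ) ≤ (b : ℤ) := by exact_mod_cast hb
        have hcpos : 1 ≤ c := by omega
        have hcpos' : (0 : ℤ) ≤ (c : ℤ) - 1 := by
          have : (1 : ℤ) ≤ (c : ℤ) := by exact_mod_cast hcpos
          omega
        have h3 : (c : ℤ) - 1 ≤ ((c : ℤ) - 1) * b := le_mul_of_one_le_right hcpos' hb1
        rw [h1, sub_mul]
        have h4 : ((c : ℤ) - 1) * b = (c : ℤ) * b - b := by ring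
        rw [h4] at h3
        linarith [hj, h2, h3, hb1]
      obtain ⟨m', hm'⟩ := exists_xpow_divisible hsmul hx hN (n - c) j mm hmm harith
      exact mem_xpow_smul_iff.mpr ⟨m', hm'⟩
    have h2 := finrank_quot_mono (k := k) hle
    rw [hrnc] at h2
    exact h2
  -- pass to real sequences and squeeze
  have hlim : Tendsto (fun n : ℕ => (E : ℝ) - (c * E) / n) atTop (nhds E) := by
    have h0 := tendsto_const_div_atTop_nhds_zero_nat ((c : ℝ) * E)
    have := tendsto_const_nhds (x := (E : ℝ)) (f := atTop (α := ℕ)) |>.sub h0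
    simpa using this
  refine tendsto_of_tendsto_of_tendsto_of_le_of_le' hlim tendsto_const_nhds ?_ ?_
  · -- lower
    filter_upwards [eventually_ge_atTop (max c 1)] with n hn
    have hc1 : c ≤ n := le_trans (le_max_left _ _) hn
    have hn1 : 1 ≤ n := le_trans (le_max_right _ _) hn
    have hnR : (0 : ℝ) < n := by exact_mod_cast hn1
    have h1 := hlb n hc1
    have h2 : ((n : ℝ) - c) * E ≤ (a n : ℝ) := by
      have : (((n - c) * E : ℕ) : ℝ) = ((n : ℝ) - c) * E := by
        push_cast [Nat.cast_sub hc1]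
        ring
      rw [← this]
      exact_mod_cast h1
    have h3 : (E : ℝ) - (c * E) / n = (((n : ℝ) - c) * E) / n := by
      field_simp
    rw [h3]
    gcongr
  · -- upper
    filter_upwards [eventually_ge_atTop 1] with n hn
    have hnR : (0 : ℝ) < n := by exact_mod_cast hn
    have h1 : (a n : ℝ) ≤ (n : ℝ) * E := by exact_mod_cast hub n
    rw [div_le_iff₀ hnR]
    calc (a n : ℝ) ≤ (n : ℝ) * E := h1
      _ = (E : ℝ) * n := by ring
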